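/- Let x_0, …, x_n be distinct points of ℂ, let z_1, …, z_m ∈ ℂ with m ≤ n and z_j ∉ {x_0, …, x_n} for all j, and set q(s) = ∏_{j=1}^m (s - z_j), λ_k = ∏_{j≠k} 1/(x_k - x_j), and w_k = λ_k·q(x_k). Then for every polynomial p over ℂ with deg p ≤ n and every x ∈ ℂ with x ∉ {x_0, …, x_n} and q(x) ≠ 0, one has ∑_{k=0}^n w_k/(x - x_k) ≠ 0 and (∑_{k=0}^n w_k·(p(x_k)/q(x_k))/(x - x_k)) / (∑_{k=0}^n w_k/(x - x_k)) = p(x)/q(x); that is, the rational function p/q with prescribed poles z_1, …, z_m is reproduced by the barycentric rational formula with weights w_k = λ_k·∏_{j=1}^m (x_k - z_j). -/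

import Mathlib

open Finset Polynomial

lemma key_lemma (n : ℕ) (x : Fin (n + 1) → ℂ) (hx : Function.Injective x)
    (r : Polynomial ℂ) (hr : r.degree ≤ n) (X : ℂ) (hX : ∀ i, X ≠ x i) :
    ∑ k, (∏ j ∈ univ.erase k, (1 / (x k - x j))) * r.eval (x k) / (X - x k)
      = r.eval X / ∏ i, (X - x i) := by
  have hXi : ∀ i : Fin (n+1), X - x i ≠ 0 := fun i => sub_ne_zero.mpr (hX i)
  have hℓ : (∏ i, (X - x i)) ≠ 0 := prod_ne_zero_iff.mpr fun i _ => hXi i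
  have hinj : Set.InjOn x (univ : Finset (Fin (n+1))) := fun a _ b _ h => hx h
  have hdeg : r.degree < (#(univ : Finset (Fin (n+1))) : ℕ) := by
    rw [card_univ, Fintype.card_fin]
    exact lt_of_le_of_lt hr (by exact_mod_cast Nat.lt_succ_self n)
  have heq := Lagrange.eq_interpolate hinj hdeg
  have hEval : r.eval X = ∑ k, r.eval (x k) * ∏ j ∈ univ.erase k, ((x k - x j)⁻¹ * (X - x j)) := by
    conv_lhs => rw [heq]
    rw [Lagrange.interpolate_apply, eval_finset_sum]
    refine sum_congr rfl fun k _ => ?_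
    rw [eval_mul, eval_C, Lagrange.basis, eval_prod]
    congr 1
    refine prod_congr rfl fun j hj => ?_
    simp [Lagrange.basisDivisor]
  rw [eq_div_iff hℓ]
  rw [hEval, sum_mul]
  refine sum_congr rfl fun k _ => ?_
  have : ∏ i, (X - x i) = (X - x k) * ∏ j ∈ univ.erase k, (X - x j) :=
    (mul_prod_erase univ _ (mem_univ k)).symm
  rw [this]
  field_simp
  rw [show ∀ a b : ℂ, a * (X - x k) * b / (X - x k) = a * b from fun a b => by
    rw [mul_right_comm, mul_div_cancel_right₀ _ (hXi k)]]
  simp only [prod_div_distrib, prod_const_one]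
  ring

/-- Barycentric representation (1.1c) of a rational function `p/q` of type `(n, m)` with
prescribed poles `z_1, …, z_m`, with modified weights `w_k = λ_k · ∏_j (x_k - z_j)`. -/
theorem barycentric_formula_rational (n m : ℕ) (hmn : m ≤ n)
    (x : Fin (n + 1) → ℂ) (hx : Function.Injective x)
    (z : Fin m → ℂ) (hz : ∀ j i, z j ≠ x i)
    (q : ℂ → ℂ) (hq : ∀ s, q s = ∏ j, (s - z j))
    (lam w : Fin (n + 1) → ℂ)
    (hlam : ∀ k, lam k = ∏ j ∈ univ.erase k, (1 / (x k - x j)))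
    (hw : ∀ k, w k = lam k * q (x k))
    (p : Polynomial ℂ) (hp : p.degree ≤ n)
    (X : ℂ) (hX : ∀ i, X ≠ x i) (hqX : q X ≠ 0) :
    (∑ k, w k / (X - x k)) ≠ 0 ∧
      (∑ k, w k * (p.eval (x k) / q (x k)) / (X - x k)) / (∑ k, w k / (X - x k))
        = p.eval X / q X := by
  set Q : Polynomial ℂ := ∏ j, (Polynomial.X - Polynomial.C (z j)) with hQ
  have hQeval : ∀ s, Q.eval s = q s := by
    intro s
    rw [hq, hQ, eval_prod]
    simp
  have hQdeg : Q.degree ≤ n := by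
    rw [hQ, degree_prod]
    simp only [degree_X_sub_C, sum_const, card_univ, Fintype.card_fin, nsmul_eq_mul, mul_one]
    exact_mod_cast hmn
  have hXi : ∀ i : Fin (n+1), X - x i ≠ 0 := fun i => sub_ne_zero.mpr (hX i)
  have hℓ : (∏ i, (X - x i)) ≠ 0 := prod_ne_zero_iff.mpr fun i _ => hXi i
  have hqxk : ∀ k, q (x k) ≠ 0 := by
    intro k
    rw [hq]
    exact prod_ne_zero_iff.mpr fun j _ => sub_ne_zero.mpr (hz j k).symm
  have hden : (∑ k, w k / (X - x k)) = q X / ∏ i, (X - x i) := by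
    rw [← hQeval, ← key_lemma n x hx Q hQdeg X hX]
    exact sum_congr rfl fun k _ => by rw [hw, hlam, hQeval]
  have hnum : (∑ k, w k * (p.eval (x k) / q (x k)) / (X - x k))
      = p.eval X / ∏ i, (X - x i) := by
    rw [← key_lemma n x hx p hp X hX]
    refine sum_congr rfl fun k _ => ?_
    have h1 : q (x k) * (p.eval (x k) / q (x k)) = p.eval (x k) := by
      field_simp
      exact mul_div_cancel_left₀ _ (hqxk k)
    rw [hw, hlam, mul_assoc, h1]
  have hden0 : (∑ k, w k / (X - x k)) ≠ 0 := by
    rw [hden]; exact div_ne_zero hqX hℓ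
  refine ⟨hden0, ?_⟩
  rw [hnum, hden, div_div_div_cancel_right₀]
  exact hℓ
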